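/- arXiv:quant-ph/0611096 — 5 statements merged into one kernel-verified Lean document; each statement's English description precedes it below -/
import Mathlib

section
/- (Necessity direction of the probabilistic transformation condition.) Let H, K, W be finite-dimensional complex inner product spaces, let φ_1,…,φ_n ∈ H and χ_1,…,χ_n ∈ K be unit vectors, and let η_1,…,η_n ≥ 0. Suppose there is an isometric realization of the transformation φ_i ↦ χ_i with success probabilities η_i, i.e. a linear isometry U : H → W, a linear isometry J : K → W, and vectors β_1,…,β_n ∈ W each orthogonal to the range of J, such that U φ_i = √η_i · (J χ_i) + β_i for all i. Then the n×n complex matrix M with entries M_{ij} = ⟨φ_i, φ_j⟩ − √(η_i η_j) ⟨χ_i, χ_j⟩ is positive semidefinite (indeed M is the Gram matrix of (β_1,…,β_n)), and in particular η_i ≤ 1 for every i. -/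
open scoped ComplexOrder

/-- necessity direction of the probabilistic transformation condition.
If a linear isometry `U : H → W`, a linear isometry `J : K → W` and vectors
`β₁, …, βₙ ∈ W`, each orthogonal to the range of `J`, realize the transformation
`φᵢ ↦ χᵢ` of unit vectors with success probabilities `ηᵢ ≥ 0`, i.e.
`U φᵢ = √ηᵢ • (J χᵢ) + βᵢ`, then the matrix `M` with entries
`Mᵢⱼ = ⟨φᵢ, φⱼ⟩ − √(ηᵢ ηⱼ) ⟨χᵢ, χⱼ⟩` is positive semidefinite; indeed `M` is the
Gram matrix of `(β₁, …, βₙ)`, and in particular `ηᵢ ≤ 1` for every `i`. -/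
theorem posSemidef_of_isometric_realization {n : ℕ} {H K W : Type*}
    [NormedAddCommGroup H] [InnerProductSpace ℂ H] [FiniteDimensional ℂ H]
    [NormedAddCommGroup K] [InnerProductSpace ℂ K] [FiniteDimensional ℂ K]
    [NormedAddCommGroup W] [InnerProductSpace ℂ W] [FiniteDimensional ℂ W]
    (φ : Fin n → H) (χ : Fin n → K) (η : Fin n → ℝ)
    (hφ : ∀ i, ‖φ i‖ = 1) (hχ : ∀ i, ‖χ i‖ = 1) (hη : ∀ i, 0 ≤ η i)
    (U : H →ₗᵢ[ℂ] W) (J : K →ₗᵢ[ℂ] W) (β : Fin n → W)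
    (hβ : ∀ i, ∀ x : K, (inner ℂ (J x) (β i) : ℂ) = 0)
    (hU : ∀ i, U (φ i) = (Real.sqrt (η i) : ℂ) • J (χ i) + β i) :
    (Matrix.of fun i j =>
        (inner ℂ (φ i) (φ j) : ℂ)
          - (Real.sqrt (η i * η j) : ℂ) * (inner ℂ (χ i) (χ j) : ℂ)).PosSemidef
      ∧ (∀ i j,
          (inner ℂ (φ i) (φ j) : ℂ)
            - (Real.sqrt (η i * η j) : ℂ) * (inner ℂ (χ i) (χ j) : ℂ)
            = (inner ℂ (β i) (β j) : ℂ))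
      ∧ (∀ i, η i ≤ 1) := by
  have hβ' : ∀ i, ∀ x : K, (inner ℂ (β i) (J x) : ℂ) = 0 := by
    intro i x
    rw [← inner_conj_symm, hβ i x, map_zero]
  have key : ∀ i j,
      (inner ℂ (φ i) (φ j) : ℂ)
        - (Real.sqrt (η i * η j) : ℂ) * (inner ℂ (χ i) (χ j) : ℂ)
        = (inner ℂ (β i) (β j) : ℂ) := by
    intro i j
    have h1 : (inner ℂ (φ i) (φ j) : ℂ) = inner ℂ (U (φ i)) (U (φ j)) :=
      (U.inner_map_map _ _).symm
    rw [h1, hU i, hU j]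
    simp only [inner_add_left, inner_add_right, inner_smul_left, inner_smul_right,
      hβ, hβ', J.inner_map_map, Complex.conj_ofReal, mul_zero, zero_mul, add_zero, zero_add]
    rw [Real.sqrt_mul (hη i)]
    push_cast
    ring
  have hgram : ∀ (x : Fin n → ℂ),
      dotProduct (star x) ((Matrix.of fun i j =>
          (inner ℂ (φ i) (φ j) : ℂ)
            - (Real.sqrt (η i * η j) : ℂ) * (inner ℂ (χ i) (χ j) : ℂ)).mulVec x)
        = inner ℂ (∑ i, x i • β i) (∑ j, x j • β j) := by
    intro x
    simp only [dotProduct, Matrix.mulVec, dotProduct, Matrix.of_apply, key,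
      sum_inner, inner_sum, inner_smul_left, inner_smul_right, Pi.star_apply, Finset.mul_sum,
      Complex.star_def]
    rw [Finset.sum_comm]
    congr 1; ext i; congr 1; ext j; ring
  refine ⟨Matrix.posSemidef_iff_dotProduct_mulVec.mpr ⟨?_, ?_⟩, key, ?_⟩
  · ext i j
    simp only [Matrix.conjTranspose_apply, Matrix.of_apply, key, Complex.star_def,
      inner_conj_symm]
  · intro x
    rw [hgram x, Complex.le_def]
    constructor
    · simpa using inner_self_nonneg (𝕜 := ℂ) (x := ∑ i, x i • β i)
    · exact (inner_self_im (𝕜 := ℂ) (∑ i, x i • β i)).symm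
  · intro i
    have h := key i i
    have h1 : (inner ℂ (φ i) (φ i) : ℂ) = 1 := by
      rw [@inner_self_eq_norm_sq_to_K ℂ, hφ i]; norm_num
    have h2 : (inner ℂ (χ i) (χ i) : ℂ) = 1 := by
      rw [@inner_self_eq_norm_sq_to_K ℂ, hχ i]; norm_num
    rw [h1, h2, Real.sqrt_mul_self (hη i), mul_one] at h
    have hre : ((inner ℂ (β i) (β i) : ℂ)).re = ‖β i‖ ^ 2 := by
      rw [← RCLike.re_to_complex]
      exact inner_self_eq_norm_sq (β i)
    have h' := congrArg Complex.re h
    rw [hre, Complex.sub_re, Complex.one_re, Complex.ofReal_re] at h'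
    nlinarith [sq_nonneg ‖β i‖]
end

section
/- (Sufficiency direction of the probabilistic transformation condition.) Let H and K be finite-dimensional complex inner product spaces, let φ_1,…,φ_n ∈ H and χ_1,…,χ_n ∈ K be unit vectors, and let η_1,…,η_n ≥ 0. If the n×n complex matrix M with entries M_{ij} = ⟨φ_i, φ_j⟩ − √(η_i η_j) ⟨χ_i, χ_j⟩ is positive semidefinite, then there exists an isometric realization of the transformation φ_i ↦ χ_i with success probabilities η_i: a finite-dimensional complex inner product space W, a linear isometry U : H → W, a linear isometry J : K → W, and vectors β_1,…,β_n ∈ W each orthogonal to the range of J, such that U φ_i = √η_i · (J χ_i) + β_i for all i. -/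
open scoped ComplexOrder

private lemma exists_isometry_extension {n : ℕ} {H W₀ : Type*}
    [NormedAddCommGroup H] [InnerProductSpace ℂ H] [FiniteDimensional ℂ H]
    [NormedAddCommGroup W₀] [InnerProductSpace ℂ W₀]
    (v : Fin n → H) (w : Fin n → W₀)
    (hg : ∀ i j, (inner ℂ (v i) (v j) : ℂ) = inner ℂ (w i) (w j)) :
    ∃ U : H →ₗᵢ[ℂ] WithLp 2 (W₀ × H),
      ∀ i, U (v i) = (WithLp.equiv 2 (W₀ × H)).symm (w i, 0) := by
  classical
  set S : (Fin n → ℂ) →ₗ[ℂ] H := Fintype.linearCombination ℂ v with hS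
  set T : (Fin n → ℂ) →ₗ[ℂ] W₀ := Fintype.linearCombination ℂ w with hT
  have hST : ∀ c d : Fin n → ℂ, (inner ℂ (S c) (S d) : ℂ) = inner ℂ (T c) (T d) := by
    intro c d
    simp only [hS, hT, Fintype.linearCombination_apply, sum_inner, inner_sum,
      inner_smul_left, inner_smul_right, hg]
  have hker : LinearMap.ker S ≤ LinearMap.ker T := by
    intro c hc
    have h0 : (inner ℂ (T c) (T c) : ℂ) = 0 := by
      rw [← hST]
      simp [LinearMap.mem_ker.mp hc]
    simpa [inner_self_eq_zero] using h0
  set Sq : ((Fin n → ℂ) ⧸ LinearMap.ker S) →ₗ[ℂ] H :=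
    (LinearMap.ker S).liftQ S le_rfl with hSq
  set Tq : ((Fin n → ℂ) ⧸ LinearMap.ker S) →ₗ[ℂ] W₀ :=
    (LinearMap.ker S).liftQ T hker with hTq
  have hSqinj : LinearMap.ker Sq = ⊥ := Submodule.ker_liftQ_eq_bot _ _ _ le_rfl
  obtain ⟨g, hgS⟩ := Sq.exists_leftInverse_of_injective hSqinj
  set L : H →ₗ[ℂ] W₀ := Tq.comp g with hL
  have hLS : ∀ c, L (S c) = T c := by
    intro c
    have h1 : S c = Sq ((LinearMap.ker S).mkQ c) := by
      rw [hSq, ← LinearMap.comp_apply, Submodule.liftQ_mkQ]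
    have h2 : g (Sq ((LinearMap.ker S).mkQ c)) = (LinearMap.ker S).mkQ c := by
      rw [← LinearMap.comp_apply, hgS]; rfl
    rw [hL, LinearMap.comp_apply, h1, h2, hTq, ← LinearMap.comp_apply,
      Submodule.liftQ_mkQ]
  set E : Submodule ℂ H := LinearMap.range S with hE
  have hLinner : ∀ x ∈ E, ∀ y ∈ E, (inner ℂ (L x) (L y) : ℂ) = inner ℂ x y := by
    rintro x ⟨c, rfl⟩ y ⟨d, rfl⟩
    rw [hLS, hLS, ← hST]
  set P : H →ₗ[ℂ] H := E.subtype.comp (E.orthogonalProjectionOnto).toLinearMap with hP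
  have hPmem : ∀ x, P x ∈ E := fun x => (E.orthogonalProjectionOnto x).2
  have hPorth : ∀ x, x - P x ∈ Eᗮ := fun x => E.sub_starProjection_mem_orthogonal x
  set U₀ : H →ₗ[ℂ] WithLp 2 (W₀ × H) :=
    (WithLp.linearEquiv 2 ℂ (W₀ × H)).symm.toLinearMap.comp
      ((L.comp P).prod (LinearMap.id - P)) with hU₀
  have hU₀apply : ∀ x, U₀ x = (WithLp.equiv 2 (W₀ × H)).symm (L (P x), x - P x) :=
    fun x => rfl
  have hinner : ∀ x y, (inner ℂ (U₀ x) (U₀ y) : ℂ) = inner ℂ x y := by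
    intro x y
    have h1 : (inner ℂ (U₀ x) (U₀ y) : ℂ)
        = inner ℂ (L (P x)) (L (P y)) + inner ℂ (x - P x) (y - P y) := rfl
    rw [h1, hLinner _ (hPmem x) _ (hPmem y)]
    have hxy : (inner ℂ x y : ℂ)
        = inner ℂ (P x + (x - P x)) (P y + (y - P y)) := by
      congr 1 <;> abel
    rw [hxy, inner_add_left, inner_add_right, inner_add_right,
      Submodule.inner_right_of_mem_orthogonal (hPmem x) (hPorth y),
      Submodule.inner_left_of_mem_orthogonal (hPmem y) (hPorth x)]
    ring
  refine ⟨U₀.isometryOfInner hinner, fun i => ?_⟩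
  have hvi : v i = S (Pi.single i 1) := by
    rw [hS, Fintype.linearCombination_apply_single, one_smul]
  have hPvi : P (v i) = v i :=
    E.starProjection_eq_self_iff.mpr ⟨Pi.single i 1, hvi.symm⟩
  have hLvi : L (v i) = w i := by
    rw [hvi, hLS, hT, Fintype.linearCombination_apply_single, one_smul]
  show U₀ (v i) = _
  rw [hU₀apply, hPvi, hLvi, sub_self]

set_option maxHeartbeats 1000000 in
set_option synthInstance.maxHeartbeats 1000000 in
/-- sufficiency direction of the probabilistic transformation
condition. If the matrix `M` with entries `Mᵢⱼ = ⟨φᵢ, φⱼ⟩ − √(ηᵢ ηⱼ) ⟨χᵢ, χⱼ⟩` is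
positive semidefinite, then there exists an isometric realization of the
transformation `φᵢ ↦ χᵢ` with success probabilities `ηᵢ`: a finite-dimensional
complex inner product space `W`, linear isometries `U : H → W` and `J : K → W`, and
vectors `β₁, …, βₙ ∈ W`, each orthogonal to the range of `J`, with
`U φᵢ = √ηᵢ • (J χᵢ) + βᵢ` for all `i`. -/
theorem exists_isometric_realization_of_posSemidef {n : ℕ} {H K : Type*}
    [NormedAddCommGroup H] [InnerProductSpace ℂ H] [FiniteDimensional ℂ H]
    [NormedAddCommGroup K] [InnerProductSpace ℂ K] [FiniteDimensional ℂ K]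
    (φ : Fin n → H) (χ : Fin n → K) (η : Fin n → ℝ)
    (hφ : ∀ i, ‖φ i‖ = 1) (hχ : ∀ i, ‖χ i‖ = 1) (hη : ∀ i, 0 ≤ η i)
    (hM : (Matrix.of fun i j =>
        (inner ℂ (φ i) (φ j) : ℂ)
          - (Real.sqrt (η i * η j) : ℂ) * (inner ℂ (χ i) (χ j) : ℂ)).PosSemidef) :
    ∃ (W : Type) (_ : NormedAddCommGroup W) (_ : InnerProductSpace ℂ W)
      (_ : FiniteDimensional ℂ W) (U : H →ₗᵢ[ℂ] W) (J : K →ₗᵢ[ℂ] W)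
      (β : Fin n → W),
        (∀ i, ∀ x : K, (inner ℂ (J x) (β i) : ℂ) = 0) ∧
        (∀ i, U (φ i) = (Real.sqrt (η i) : ℂ) • J (χ i) + β i) := by
  classical
  have hB₀ := by
    open scoped MatrixOrder in exact CStarAlgebra.nonneg_iff_eq_star_mul_self.mp hM.nonneg
  obtain ⟨B, hB⟩ := hB₀
  rw [Matrix.star_eq_conjTranspose] at hB
  obtain ⟨eH⟩ : Nonempty (H ≃ₗᵢ[ℂ] EuclideanSpace ℂ (Fin (Module.finrank ℂ H))) :=
    ⟨(stdOrthonormalBasis ℂ H).repr⟩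
  obtain ⟨eK⟩ : Nonempty (K ≃ₗᵢ[ℂ] EuclideanSpace ℂ (Fin (Module.finrank ℂ K))) :=
    ⟨(stdOrthonormalBasis ℂ K).repr⟩
  have finW : FiniteDimensional ℂ (WithLp 2 ((WithLp 2
      ((EuclideanSpace ℂ (Fin (Module.finrank ℂ K))) × (EuclideanSpace ℂ (Fin n)))) ×
      (EuclideanSpace ℂ (Fin (Module.finrank ℂ H))))) := inferInstance
  set H' := EuclideanSpace ℂ (Fin (Module.finrank ℂ H)) with hH'
  set K' := EuclideanSpace ℂ (Fin (Module.finrank ℂ K)) with hK'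
  set V := EuclideanSpace ℂ (Fin n) with hV'
  set W₀ := WithLp 2 (K' × V) with hW₀'
  set φ' : Fin n → H' := fun i => eH (φ i) with hφ'
  set χ' : Fin n → K' := fun i => eK (χ i) with hχ'
  set b : Fin n → V := fun i => (WithLp.equiv 2 (Fin n → ℂ)).symm (fun k => B k i) with hb
  have hbij : ∀ i j, (inner ℂ (b i) (b j) : ℂ)
      = (inner ℂ (φ i) (φ j) : ℂ)
          - (Real.sqrt (η i * η j) : ℂ) * (inner ℂ (χ i) (χ j) : ℂ) := by
    intro i j
    have h1 : (inner ℂ (b i) (b j) : ℂ) = ∑ k, (starRingEnd ℂ) (B k i) * B k j := by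
      rw [hb, PiLp.inner_apply]
      simp [WithLp.equiv_symm_apply, RCLike.inner_apply, mul_comm]
    have h2 : (B.conjTranspose * B) i j = ∑ k, (starRingEnd ℂ) (B k i) * B k j := by
      simp [Matrix.mul_apply, Matrix.conjTranspose_apply]
    have h3 := congrFun (congrFun hB i) j
    rw [Matrix.of_apply] at h3
    rw [h1, ← h2, ← h3]
  set w : Fin n → W₀ :=
    fun i => (WithLp.equiv 2 (K' × V)).symm ((Real.sqrt (η i) : ℂ) • χ' i, b i) with hw
  have hg : ∀ i j, (inner ℂ (φ' i) (φ' j) : ℂ) = inner ℂ (w i) (w j) := by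
    intro i j
    have h1 : (inner ℂ (w i) (w j) : ℂ)
        = inner ℂ ((Real.sqrt (η i) : ℂ) • χ' i) ((Real.sqrt (η j) : ℂ) • χ' j)
            + inner ℂ (b i) (b j) := by
      rw [hw]; rfl
    rw [h1, hbij, inner_smul_left, inner_smul_right, Complex.conj_ofReal]
    have hχmap : (inner ℂ (χ' i) (χ' j) : ℂ) = inner ℂ (χ i) (χ j) :=
      eK.inner_map_map _ _
    have hφmap : (inner ℂ (φ' i) (φ' j) : ℂ) = inner ℂ (φ i) (φ j) :=
      eH.inner_map_map _ _
    have hsq : (Real.sqrt (η i * η j) : ℂ)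
        = (Real.sqrt (η i) : ℂ) * (Real.sqrt (η j) : ℂ) := by
      rw [Real.sqrt_mul (hη i)]; push_cast; ring
    rw [hχmap, hφmap, hsq]; ring
  obtain ⟨U', hU'⟩ := exists_isometry_extension φ' w hg
  set J₁ : K' →ₗ[ℂ] W₀ :=
    (WithLp.linearEquiv 2 ℂ (K' × V)).symm.toLinearMap.comp (LinearMap.inl ℂ K' V) with hJ₁
  set J₀ : K' →ₗ[ℂ] WithLp 2 (W₀ × H') :=
    (WithLp.linearEquiv 2 ℂ (W₀ × H')).symm.toLinearMap.comp
      ((LinearMap.inl ℂ W₀ H').comp J₁) with hJ₀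
  have hJapp : ∀ x : K', J₀ x = (WithLp.equiv 2 (W₀ × H')).symm
      ((WithLp.equiv 2 (K' × V)).symm (x, 0), 0) := fun _ => rfl
  have hJinner : ∀ x y : K', (inner ℂ (J₀ x) (J₀ y) : ℂ) = inner ℂ x y := by
    intro x y
    rw [hJapp, hJapp]
    change (inner ℂ x y + inner ℂ (0 : V) 0) + inner ℂ (0 : H') 0 = _
    simp
  set J' : K' →ₗᵢ[ℂ] WithLp 2 (W₀ × H') := J₀.isometryOfInner hJinner with hJ'
  set β : Fin n → WithLp 2 (W₀ × H') := fun i =>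
    (WithLp.equiv 2 (W₀ × H')).symm ((WithLp.equiv 2 (K' × V)).symm (0, b i), 0) with hβ
  refine ⟨WithLp 2 (W₀ × H'), inferInstance, inferInstance, finW,
    U'.comp eH.toLinearIsometry, J'.comp eK.toLinearIsometry, β, ?_, ?_⟩
  · intro i x
    have h0 : (J'.comp eK.toLinearIsometry) x = J₀ (eK x) := rfl
    rw [h0, hJapp, hβ]
    change (inner ℂ (eK x) (0 : K') + inner ℂ (0 : V) (b i)) + inner ℂ (0 : H') 0 = (0 : ℂ)
    simp
  · intro i
    have h0 : (U'.comp eH.toLinearIsometry) (φ i) = U' (φ' i) := rfl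
    have h1 : (J'.comp eK.toLinearIsometry) (χ i) = J₀ (χ' i) := rfl
    rw [h0, hU' i, h1, hJapp, hβ, hw]
    change _ = WithLp.toLp 2 (WithLp.toLp 2 ((Real.sqrt (η i) : ℂ) • χ' i + 0,
      (Real.sqrt (η i) : ℂ) • 0 + b i), (Real.sqrt (η i) : ℂ) • (0 : H') + 0)
    simp [WithLp.equiv_symm_apply]
end

section
/- (Lemma 1.) Let H and H₂ be finite-dimensional complex inner product spaces, let φ_1,…,φ_n ∈ H and ψ_1,…,ψ_n ∈ H₂ be unit vectors, and let η_1,…,η_n ∈ [0,1]. The following are equivalent: (i) there exists an n×n complex positive semidefinite matrix A with A_{ii} = 1 for all i such that the matrix with entries ⟨φ_i, φ_j⟩ − √(η_i η_j) ⟨ψ_i, ψ_j⟩ A_{ij} is positive semidefinite; (ii) there exist finite-dimensional complex inner product spaces K and K', unit vectors χ_1,…,χ_n ∈ K and unit vectors α_1,…,α_n ∈ K' satisfying ⟨χ_i, χ_j⟩ = ⟨ψ_i, ψ_j⟩ · ⟨α_i, α_j⟩ for all i, j, together with an isometric realization of the transformation φ_i ↦ χ_i with success probabilities η_i. -/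
open scoped ComplexOrder

set_option synthInstance.maxHeartbeats 1000000
set_option maxHeartbeats 1000000

section Aux

lemma gram_posSemidef {n : ℕ} {E : Type*} [NormedAddCommGroup E] [InnerProductSpace ℂ E]
    (v : Fin n → E) : (Matrix.of fun i j => (inner ℂ (v i) (v j) : ℂ)).PosSemidef := by
  rw [Matrix.posSemidef_iff_dotProduct_mulVec]
  constructor
  · ext i j
    simp [Matrix.conjTranspose_apply, inner_conj_symm]
  · intro x
    have key : dotProduct (star x)
        ((Matrix.of fun i j => (inner ℂ (v i) (v j) : ℂ)).mulVec x)
        = inner ℂ (∑ i, x i • v i) (∑ j, x j • v j) := by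
      simp only [dotProduct, Matrix.mulVec, Pi.star_apply, Matrix.of_apply,
        inner_sum, sum_inner, inner_smul_left, inner_smul_right, dotProduct,
        Finset.mul_sum]
      rw [Finset.sum_comm]
      refine Finset.sum_congr rfl fun i _ => Finset.sum_congr rfl fun j _ => ?_
      rw [RCLike.star_def]
      ring
    rw [key, inner_self_eq_norm_sq_to_K]
    norm_cast
    positivity

lemma exists_gram_vectors {n : ℕ} {C : Matrix (Fin n) (Fin n) ℂ} (hC : C.PosSemidef) :
    ∃ v : Fin n → EuclideanSpace ℂ (Fin n), ∀ i j, (inner ℂ (v i) (v j) : ℂ) = C i j := by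
  obtain ⟨B, rfl⟩ : ∃ B : Matrix (Fin n) (Fin n) ℂ, C = star B * B := by
    open scoped MatrixOrder in
    exact CStarAlgebra.nonneg_iff_eq_star_mul_self.mp hC.nonneg
  refine ⟨fun i => WithLp.toLp 2 (fun k => B k i), fun i j => ?_⟩
  simp [PiLp.inner_apply, Matrix.mul_apply, Matrix.star_eq_conjTranspose, Matrix.conjTranspose_apply, RCLike.inner_apply]
  exact Finset.sum_congr rfl fun _ _ => mul_comm _ _

lemma norm_eq_one_of_inner_self {E : Type*} [NormedAddCommGroup E] [InnerProductSpace ℂ E]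
    {x : E} (h : (inner ℂ x x : ℂ) = 1) : ‖x‖ = 1 := by
  have h2 := inner_self_eq_norm_sq_to_K (𝕜 := ℂ) x
  rw [h] at h2
  have h5 : ((1:ℝ):ℂ) = ((‖x‖^2 : ℝ):ℂ) := by push_cast; exact h2
  have h3 : (‖x‖:ℝ)^2 = 1 := (Complex.ofReal_inj.mp h5).symm
  nlinarith [norm_nonneg x]

lemma exists_isometry_matching {n : ℕ} {H W₀ : Type*}
    [NormedAddCommGroup H] [InnerProductSpace ℂ H] [FiniteDimensional ℂ H]
    [NormedAddCommGroup W₀] [InnerProductSpace ℂ W₀]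
    (φ : Fin n → H) (v : Fin n → W₀)
    (h : ∀ i j, (inner ℂ (v i) (v j) : ℂ) = inner ℂ (φ i) (φ j)) :
    ∃ U : H →ₗᵢ[ℂ] WithLp 2 (W₀ × EuclideanSpace ℂ (Fin (Module.finrank ℂ H))),
      ∀ i, U (φ i) = (WithLp.equiv 2 (W₀ × EuclideanSpace ℂ (Fin (Module.finrank ℂ H)))).symm
        (v i, 0) := by
  classical
  set R := (stdOrthonormalBasis ℂ H).repr with hR
  set H' := EuclideanSpace ℂ (Fin (Module.finrank ℂ H)) with hH'
  set Lφ : (Fin n → ℂ) →ₗ[ℂ] H := Fintype.linearCombination ℂ φ with hLφ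
  set Lv : (Fin n → ℂ) →ₗ[ℂ] W₀ := Fintype.linearCombination ℂ v with hLv
  have key : ∀ c d : Fin n → ℂ, (inner ℂ (Lv c) (Lv d) : ℂ) = inner ℂ (Lφ c) (Lφ d) := by
    intro c d
    simp only [hLφ, hLv, Fintype.linearCombination_apply, inner_sum, sum_inner,
      inner_smul_left, inner_smul_right, h]
  have hker : LinearMap.ker Lφ ≤ LinearMap.ker Lv := by
    intro c hc
    rw [LinearMap.mem_ker] at hc ⊢
    rw [← inner_self_eq_zero (𝕜 := ℂ), key, hc, inner_zero_left]
  set E := LinearMap.range Lφ with hE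
  set S : E →ₗ[ℂ] W₀ :=
    (Submodule.liftQ (LinearMap.ker Lφ) Lv hker).comp
      (Lφ.quotKerEquivRange.symm.toLinearMap) with hS
  have hSapply : ∀ (c : Fin n → ℂ) (hm : Lφ c ∈ E), S ⟨Lφ c, hm⟩ = Lv c := by
    intro c hm
    have h1 : Lφ.quotKerEquivRange (Submodule.Quotient.mk c) = ⟨Lφ c, hm⟩ :=
      Subtype.ext (Lφ.quotKerEquivRange_apply_mk c)
    have h2 : Lφ.quotKerEquivRange.symm ⟨Lφ c, hm⟩ = Submodule.Quotient.mk c := by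
      rw [← h1, LinearEquiv.symm_apply_apply]
    simp [hS, h2]
  have hSinner : ∀ y z : E, (inner ℂ (S y) (S z) : ℂ) = inner ℂ (y : H) (z : H) := by
    rintro ⟨y, hy⟩ ⟨z, hz⟩
    obtain ⟨cy, rfl⟩ := LinearMap.mem_range.mp hy
    obtain ⟨cz, rfl⟩ := LinearMap.mem_range.mp hz
    rw [hSapply cy _, hSapply cz _, key]
  set P := E.orthogonalProjectionOnto with hP
  set Umap : H →ₗ[ℂ] WithLp 2 (W₀ × H') :=
    (WithLp.linearEquiv 2 ℂ (W₀ × H')).symm.toLinearMap.comp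
      (LinearMap.prod (S.comp (P : H →ₗ[ℂ] E))
        (R.toLinearEquiv.toLinearMap.comp
          (LinearMap.id - E.subtype.comp (P : H →ₗ[ℂ] E)))) with hUmap
  have hUapp : ∀ x : H, Umap x
      = (WithLp.equiv 2 (W₀ × H')).symm (S (P x), R (x - (P x : H))) := fun x => rfl
  have hinner : ∀ x y : H, (inner ℂ (Umap x) (Umap y) : ℂ) = inner ℂ x y := by
    intro x y
    rw [hUapp, hUapp, WithLp.prod_inner_apply]
    simp only [WithLp.equiv_symm_apply, WithLp.ofLp_toLp]
    rw [hSinner, R.inner_map_map]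
    have hx : x = (P x : H) + (x - (P x : H)) := by abel
    have hy : y = (P y : H) + (y - (P y : H)) := by abel
    conv_rhs => rw [hx, hy]
    rw [inner_add_left, inner_add_right, inner_add_right,
      Submodule.inner_right_of_mem_orthogonal (SetLike.coe_mem (P x))
        (by exact Submodule.sub_starProjection_mem_orthogonal y : y - (P y : H) ∈ Eᗮ),
      Submodule.inner_left_of_mem_orthogonal (SetLike.coe_mem (P y))
        (by exact Submodule.sub_starProjection_mem_orthogonal x : x - (P x : H) ∈ Eᗮ)]
    ring
  refine ⟨Umap.isometryOfInner hinner, fun i => ?_⟩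
  have hmem : φ i ∈ E := by
    refine ⟨Pi.single i 1, ?_⟩
    simp [hLφ, Fintype.linearCombination_apply, Pi.single_apply]
  have hPφ : P (φ i) = ⟨φ i, hmem⟩ := by
    apply Subtype.ext
    exact Submodule.starProjection_eq_self_iff.mpr hmem
  have hLφs : Lφ (Pi.single i 1) = φ i := by
    simp [hLφ, Fintype.linearCombination_apply, Pi.single_apply]
  have hLvs : Lv (Pi.single i 1) = v i := by
    simp [hLv, Fintype.linearCombination_apply, Pi.single_apply]
  have hSφ : S ⟨φ i, hmem⟩ = v i := by
    have := hSapply (Pi.single i 1) (by rw [hLφs]; exact hmem)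
    rw [hLvs] at this
    convert this using 2
    exact Subtype.ext hLφs.symm
  rw [LinearMap.coe_isometryOfInner, hUapp, hPφ, hSφ]
  congr 1
  rw [Prod.mk.injEq]
  refine ⟨rfl, ?_⟩
  have : φ i - ((⟨φ i, hmem⟩ : E) : H) = 0 := by simp
  rw [this, map_zero]

end Aux

/-- Lemma 1. For unit vectors `φ₁, …, φₙ ∈ H`, `ψ₁, …, ψₙ ∈ H₂`
and success probabilities `η₁, …, ηₙ ∈ [0,1]`, the following are equivalent:
(i) there is a positive semidefinite matrix `A` with unit diagonal such that the
matrix with entries `⟨φᵢ, φⱼ⟩ − √(ηᵢ ηⱼ) ⟨ψᵢ, ψⱼ⟩ Aᵢⱼ` is positive semidefinite;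
(ii) there are unit vectors `χᵢ` (the joint output-ancilla states) and unit ancilla
vectors `αᵢ` with `⟨χᵢ, χⱼ⟩ = ⟨ψᵢ, ψⱼ⟩ ⟨αᵢ, αⱼ⟩`, together with an isometric
realization of `φᵢ ↦ χᵢ` with success probabilities `ηᵢ`. -/
theorem probabilistic_transformation_iff {n : ℕ} {H H₂ : Type*}
    [NormedAddCommGroup H] [InnerProductSpace ℂ H] [FiniteDimensional ℂ H]
    [NormedAddCommGroup H₂] [InnerProductSpace ℂ H₂] [FiniteDimensional ℂ H₂]
    (φ : Fin n → H) (ψ : Fin n → H₂) (η : Fin n → ℝ)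
    (hφ : ∀ i, ‖φ i‖ = 1) (hψ : ∀ i, ‖ψ i‖ = 1)
    (hη : ∀ i, η i ∈ Set.Icc (0 : ℝ) 1) :
    (∃ A : Matrix (Fin n) (Fin n) ℂ, A.PosSemidef ∧ (∀ i, A i i = 1) ∧
        (Matrix.of fun i j =>
            (inner ℂ (φ i) (φ j) : ℂ)
              - (Real.sqrt (η i * η j) : ℂ) * (inner ℂ (ψ i) (ψ j) : ℂ)
                  * A i j).PosSemidef)
      ↔
    (∃ (K : Type) (_ : NormedAddCommGroup K) (_ : InnerProductSpace ℂ K)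
        (_ : FiniteDimensional ℂ K)
        (K' : Type) (_ : NormedAddCommGroup K') (_ : InnerProductSpace ℂ K')
        (_ : FiniteDimensional ℂ K')
        (χ : Fin n → K) (α : Fin n → K'),
        (∀ i, ‖χ i‖ = 1) ∧ (∀ i, ‖α i‖ = 1) ∧
        (∀ i j, (inner ℂ (χ i) (χ j) : ℂ)
            = (inner ℂ (ψ i) (ψ j) : ℂ) * (inner ℂ (α i) (α j) : ℂ)) ∧
        ∃ (W : Type) (_ : NormedAddCommGroup W) (_ : InnerProductSpace ℂ W)
          (_ : FiniteDimensional ℂ W) (U : H →ₗᵢ[ℂ] W) (J : K →ₗᵢ[ℂ] W)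
          (β : Fin n → W),
            (∀ i, ∀ x : K, (inner ℂ (J x) (β i) : ℂ) = 0) ∧
            (∀ i, U (φ i) = (Real.sqrt (η i) : ℂ) • J (χ i) + β i)) := by
  have hsqrt : ∀ i j, (Real.sqrt (η i * η j) : ℂ)
      = (Real.sqrt (η i) : ℂ) * (Real.sqrt (η j) : ℂ) := by
    intro i j
    rw [← Complex.ofReal_mul, Real.sqrt_mul (hη i).1]
  constructor
  · rintro ⟨A, hA, hAdiag, hM⟩
    obtain ⟨α, hα⟩ := exists_gram_vectors hA
    obtain ⟨b, hb⟩ := exists_gram_vectors hM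
    simp only [Matrix.of_apply] at hb
    have hαn : ∀ i, ‖α i‖ = 1 := fun i =>
      norm_eq_one_of_inner_self (by rw [hα i i, hAdiag i])
    set m := Module.finrank ℂ H₂ with hm
    set ψ' : Fin n → EuclideanSpace ℂ (Fin m) :=
      fun i => (stdOrthonormalBasis ℂ H₂).repr (ψ i) with hψ'
    have hψinner : ∀ i j, (inner ℂ (ψ' i) (ψ' j) : ℂ) = inner ℂ (ψ i) (ψ j) := fun i j =>
      (stdOrthonormalBasis ℂ H₂).repr.inner_map_map (ψ i) (ψ j)
    set χ : Fin n → EuclideanSpace ℂ (Fin m × Fin n) :=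
      fun i => WithLp.toLp 2 (fun p => ψ' i p.1 * α i p.2 : Fin m × Fin n → ℂ) with hχ
    have hχinner : ∀ i j, (inner ℂ (χ i) (χ j) : ℂ)
        = (inner ℂ (ψ i) (ψ j) : ℂ) * (inner ℂ (α i) (α j) : ℂ) := by
      intro i j
      rw [← hψinner]
      calc (inner ℂ (χ i) (χ j) : ℂ)
          = ∑ p : Fin m × Fin n,
              (starRingEnd ℂ) (ψ' i p.1 * α i p.2) * (ψ' j p.1 * α j p.2) := by
            rw [PiLp.inner_apply]; simp only [RCLike.inner_apply']; rfl
        _ = (∑ k, (starRingEnd ℂ) (ψ' i k) * ψ' j k)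
              * (∑ l, (starRingEnd ℂ) (α i l) * α j l) := by
            rw [Finset.sum_mul_sum, Fintype.sum_prod_type]
            refine Finset.sum_congr rfl fun k _ => Finset.sum_congr rfl fun l _ => ?_
            rw [map_mul]; ring
        _ = (inner ℂ (ψ' i) (ψ' j) : ℂ) * (inner ℂ (α i) (α j) : ℂ) := by
            rw [PiLp.inner_apply, PiLp.inner_apply]; simp only [RCLike.inner_apply']
    have hχn : ∀ i, ‖χ i‖ = 1 := by
      intro i
      refine norm_eq_one_of_inner_self ?_
      rw [hχinner i i, hα i i, hAdiag i, inner_self_eq_norm_sq_to_K, hψ i]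
      norm_num
    set v : Fin n → WithLp 2 (EuclideanSpace ℂ (Fin m × Fin n) × EuclideanSpace ℂ (Fin n)) :=
      fun i => (WithLp.equiv 2 _).symm ((Real.sqrt (η i) : ℂ) • χ i, b i) with hv
    have hvinner : ∀ i j, (inner ℂ (v i) (v j) : ℂ) = inner ℂ (φ i) (φ j) := by
      intro i j
      rw [hv]
      rw [WithLp.prod_inner_apply]
      simp only [WithLp.equiv_symm_apply, WithLp.ofLp_toLp]
      rw [inner_smul_left, inner_smul_right, hχinner i j, hb i j, hα i j,
        Complex.conj_ofReal, hsqrt i j]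
      ring
    obtain ⟨U, hU⟩ := exists_isometry_matching φ v hvinner
    set Jmap : EuclideanSpace ℂ (Fin m × Fin n) →ₗ[ℂ]
        WithLp 2 ((WithLp 2 (EuclideanSpace ℂ (Fin m × Fin n) × EuclideanSpace ℂ (Fin n)))
          × EuclideanSpace ℂ (Fin (Module.finrank ℂ H))) :=
      (WithLp.linearEquiv 2 ℂ _).symm.toLinearMap.comp
        ((LinearMap.inl ℂ _ _).comp
          ((WithLp.linearEquiv 2 ℂ _).symm.toLinearMap.comp
            (LinearMap.inl ℂ (EuclideanSpace ℂ (Fin m × Fin n))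
              (EuclideanSpace ℂ (Fin n))))) with hJmap
    have hJapp : ∀ x, Jmap x
        = (WithLp.equiv 2 _).symm ((WithLp.equiv 2 _).symm (x, 0), 0) := fun x => rfl
    have hJinner : ∀ x y, (inner ℂ (Jmap x) (Jmap y) : ℂ) = inner ℂ x y := by
      intro x y
      rw [hJapp, hJapp, WithLp.prod_inner_apply]
      simp only [WithLp.equiv_symm_apply, WithLp.ofLp_toLp]
      rw [WithLp.prod_inner_apply]
      simp only [WithLp.equiv_symm_apply, WithLp.ofLp_toLp, inner_zero_left, add_zero]
    set β : Fin n → WithLp 2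
        ((WithLp 2 (EuclideanSpace ℂ (Fin m × Fin n) × EuclideanSpace ℂ (Fin n)))
          × EuclideanSpace ℂ (Fin (Module.finrank ℂ H))) :=
      fun i => (WithLp.equiv 2 _).symm ((WithLp.equiv 2 _).symm (0, b i), 0) with hβ
    haveI ifd : FiniteDimensional ℂ (WithLp 2
        ((WithLp 2 (EuclideanSpace ℂ (Fin m × Fin n) × EuclideanSpace ℂ (Fin n)))
          × EuclideanSpace ℂ (Fin (Module.finrank ℂ H)))) := inferInstance
    refine ⟨EuclideanSpace ℂ (Fin m × Fin n), inferInstance, inferInstance, inferInstance,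
      EuclideanSpace ℂ (Fin n), inferInstance, inferInstance, inferInstance,
      χ, α, hχn, hαn, hχinner,
      WithLp 2 ((WithLp 2 (EuclideanSpace ℂ (Fin m × Fin n) × EuclideanSpace ℂ (Fin n)))
          × EuclideanSpace ℂ (Fin (Module.finrank ℂ H))),
      inferInstance, inferInstance, ifd,
      U, Jmap.isometryOfInner hJinner, β, ?_, ?_⟩
    · intro i x
      rw [LinearMap.coe_isometryOfInner, hJapp, hβ, WithLp.prod_inner_apply]
      simp only [WithLp.equiv_symm_apply, WithLp.ofLp_toLp]
      rw [WithLp.prod_inner_apply]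
      simp only [WithLp.equiv_symm_apply, WithLp.ofLp_toLp, inner_zero_left,
        inner_zero_right, add_zero, zero_add]
    · intro i
      rw [hU i, LinearMap.coe_isometryOfInner, hJapp, hβ, hv]
      rw [WithLp.equiv_symm_apply, ← WithLp.toLp_smul, ← WithLp.toLp_add]
      congr 1
      rw [Prod.smul_mk, Prod.mk_add_mk, smul_zero, add_zero]
      congr 1
      rw [WithLp.equiv_symm_apply, ← WithLp.toLp_smul, ← WithLp.toLp_add]
      congr 1
      rw [Prod.smul_mk, Prod.mk_add_mk, smul_zero, add_zero, zero_add]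
  · rintro ⟨K, _, _, _, K', _, _, _, χ, α, hχn, hαn, hχα, W, _, _, _, U, J, β, horth, heq⟩
    refine ⟨Matrix.of fun i j => (inner ℂ (α i) (α j) : ℂ), gram_posSemidef α, fun i => ?_, ?_⟩
    · simp only [Matrix.of_apply]
      rw [inner_self_eq_norm_sq_to_K, hαn i]
      norm_num
    · have hβJ : ∀ i j, (inner ℂ (β i) (J (χ j)) : ℂ) = 0 := by
        intro i j
        rw [← inner_conj_symm, horth i (χ j), map_zero]
      have hmat : (Matrix.of fun i j =>
          (inner ℂ (φ i) (φ j) : ℂ)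
            - (Real.sqrt (η i * η j) : ℂ) * (inner ℂ (ψ i) (ψ j) : ℂ)
                * (Matrix.of fun i j => (inner ℂ (α i) (α j) : ℂ)) i j)
          = Matrix.of fun i j => (inner ℂ (β i) (β j) : ℂ) := by
        ext i j
        simp only [Matrix.of_apply]
        have h1 : (inner ℂ (φ i) (φ j) : ℂ) = inner ℂ (U (φ i)) (U (φ j)) :=
          (U.inner_map_map _ _).symm
        rw [h1, heq i, heq j]
        simp only [inner_add_left, inner_add_right, inner_smul_left, inner_smul_right,
          horth, hβJ, J.inner_map_map, hχα, Complex.conj_ofReal, mul_zero, zero_mul,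
          add_zero, zero_add]
        rw [hsqrt i j]
        ring
      rw [hmat]
      exact gram_posSemidef β
end

section
/- (Schur product with a positive definite matrix.) Let M be an n×n complex positive definite matrix and let N be an n×n complex positive semidefinite matrix all of whose diagonal entries are strictly positive. Then the Hadamard (entrywise) product M ∘ N is positive definite. -/
open scoped ComplexOrder
open Matrix

private lemma hadamard_quad_eq {n : ℕ} (M A : Matrix (Fin n) (Fin n) ℂ)
    (x : Fin n → ℂ) :
    star x ⬝ᵥ (Matrix.hadamard M (Aᴴ * A)) *ᵥ x =
      ∑ k, star (fun i => A k i * x i) ⬝ᵥ M *ᵥ (fun i => A k i * x i) := by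
  simp only [Matrix.mulVec, dotProduct, Matrix.hadamard_apply, Matrix.mul_apply,
    Matrix.conjTranspose_apply, Pi.star_apply, Finset.mul_sum, Finset.sum_mul, star_mul']
  conv_rhs => rw [Finset.sum_comm]
  refine Finset.sum_congr rfl fun i _ => ?_
  rw [Finset.sum_comm]
  refine Finset.sum_congr rfl fun j _ => Finset.sum_congr rfl fun k _ => ?_
  ring

/-- Schur product with a positive definite matrix.
If `M` is positive definite and `N` is positive semidefinite with strictly
positive diagonal entries, then the Hadamard (entrywise) product `M ∘ N` is
positive definite. -/
theorem hadamard_posDef_of_posDef_of_posSemidef {n : ℕ}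
    (M N : Matrix (Fin n) (Fin n) ℂ)
    (hM : M.PosDef) (hN : N.PosSemidef) (hNdiag : ∀ i, 0 < N i i) :
    (Matrix.hadamard M N).PosDef := by
  obtain ⟨A, hA⟩ := (by open scoped MatrixOrder in exact CStarAlgebra.nonneg_iff_eq_star_mul_self.mp hN.nonneg : ∃ A : Matrix (Fin n) (Fin n) ℂ, N = star A * A)
  rw [Matrix.star_eq_conjTranspose] at hA
  subst hA
  rw [Matrix.posDef_iff_dotProduct_mulVec]
  constructor
  · refine Matrix.IsHermitian.ext fun i j => ?_
    simp only [Matrix.hadamard_apply, star_mul', hM.1.apply, hN.1.apply]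
  · intro x hx
    rw [hadamard_quad_eq]
    obtain ⟨i, hi⟩ := Function.ne_iff.mp hx
    have hNii := hNdiag i
    have hAk : ∃ k, A k i ≠ 0 := by
      by_contra h
      push_neg at h
      have : (Aᴴ * A) i i = 0 := by
        simp [Matrix.mul_apply, Matrix.conjTranspose_apply, h]
      rw [this] at hNii
      exact lt_irrefl _ hNii
    obtain ⟨k, hk⟩ := hAk
    apply Finset.sum_pos'
    · intro l _
      exact ((Matrix.posSemidef_iff_dotProduct_mulVec.mp hM.posSemidef).2 _)
    · refine ⟨k, Finset.mem_univ k, (Matrix.posDef_iff_dotProduct_mulVec.mp hM).2 ?_⟩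
      intro h
      have := congrFun h i
      simp only [Pi.zero_apply] at this
      exact (mul_ne_zero hk hi) this
end

section
/- (Bound on the average success probability for two states.) Let η₁, η₂ ∈ [0,1], let p₁, p₂ ≥ 0 with p₁ + p₂ = 1, and let x, y ∈ ℂ with |y| < 1. Suppose √((1−η₁)(1−η₂)) ≥ |x| − √(η₁η₂)·|y|. Then p₁η₁ + p₂η₂ ≤ (1 − 2√(p₁p₂)·|x|) / (1 − |y|). -/
lemma key_amgm (a b c d : ℝ) (ha : 0 ≤ a) (hb : 0 ≤ b) (hc : 0 ≤ c) (hd : 0 ≤ d) :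
    2 * (Real.sqrt (a * b) * Real.sqrt (c * d)) ≤ a * c + b * d := by
  have h1 : Real.sqrt (a * b) * Real.sqrt (c * d)
      = Real.sqrt (a * c) * Real.sqrt (b * d) := by
    rw [← Real.sqrt_mul (by positivity), ← Real.sqrt_mul (by positivity)]
    ring_nf
  rw [h1]
  nlinarith [sq_nonneg (Real.sqrt (a * c) - Real.sqrt (b * d)),
    Real.sq_sqrt (mul_nonneg ha hc), Real.sq_sqrt (mul_nonneg hb hd)]

/-- bound on the average success probability for two states.
If `√((1−η₁)(1−η₂)) ≥ |x| − √(η₁η₂)|y|` with `|y| < 1`, priors `p₁ + p₂ = 1`,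
then the whole success probability satisfies
`p₁η₁ + p₂η₂ ≤ (1 − 2√(p₁p₂)|x|)/(1 − |y|)`. -/
theorem average_success_probability_bound (η₁ η₂ p₁ p₂ : ℝ) (x y : ℂ)
    (hη₁ : η₁ ∈ Set.Icc (0 : ℝ) 1) (hη₂ : η₂ ∈ Set.Icc (0 : ℝ) 1)
    (hp₁ : 0 ≤ p₁) (hp₂ : 0 ≤ p₂) (hp : p₁ + p₂ = 1)
    (hy : ‖y‖ < 1)
    (h : Real.sqrt ((1 - η₁) * (1 - η₂))
        ≥ ‖x‖ - Real.sqrt (η₁ * η₂) * ‖y‖) :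
    p₁ * η₁ + p₂ * η₂
      ≤ (1 - 2 * Real.sqrt (p₁ * p₂) * ‖x‖) / (1 - ‖y‖) := by
  obtain ⟨h10, h11⟩ := hη₁
  obtain ⟨h20, h21⟩ := hη₂
  have hb0 : 0 ≤ ‖y‖ := norm_nonneg y
  have hb1 : 0 < 1 - ‖y‖ := by linarith
  have hA0 : 0 ≤ Real.sqrt (p₁ * p₂) := Real.sqrt_nonneg _
  have h1 : 2 * (Real.sqrt (p₁ * p₂) * Real.sqrt ((1 - η₁) * (1 - η₂)))
      ≤ p₁ * (1 - η₁) + p₂ * (1 - η₂) :=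
    key_amgm p₁ p₂ (1 - η₁) (1 - η₂) hp₁ hp₂ (by linarith) (by linarith)
  have h2 : 2 * (Real.sqrt (p₁ * p₂) * Real.sqrt (η₁ * η₂))
      ≤ p₁ * η₁ + p₂ * η₂ :=
    key_amgm p₁ p₂ η₁ η₂ hp₁ hp₂ h10 h20
  rw [le_div_iff₀ hb1]
  have h3 : 2 * Real.sqrt (p₁ * p₂) * ‖x‖
      ≤ 2 * (Real.sqrt (p₁ * p₂) * Real.sqrt ((1 - η₁) * (1 - η₂)))
        + 2 * (Real.sqrt (p₁ * p₂) * Real.sqrt (η₁ * η₂)) * ‖y‖ := by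
    nlinarith [mul_le_mul_of_nonneg_left h hA0]
  nlinarith [mul_le_mul_of_nonneg_right h2 hb0]
end
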